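/- For a connected bipartite vertex set S of G, the family of all connected bipartite vertex sets of G containing S equals {S} together with the disjoint union over all child generators u of S of the families of connected bipartite vertex sets of G(S, ≥u) containing S ∪ {u}. -/
import Mathlib


variable {V : Type*}

def IsBipartition (G : SimpleGraph V) (L R : Set V) : Prop :=
  (∀ v, v ∈ L ∨ v ∈ R) ∧ (∀ v, ¬(v ∈ L ∧ v ∈ R)) ∧
    ∀ u v, G.Adj u v → (u ∈ L ∧ v ∈ R) ∨ (u ∈ R ∧ v ∈ L)

def IsBip (G : SimpleGraph V) : Prop := ∃ L R : Set V, IsBipartition G L R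

/-- `S` is a connected bipartite vertex set of `G`. -/
def CBVS (G : SimpleGraph V) (S : Set V) : Prop :=
  (G.induce S).Connected ∧ IsBip (G.induce S)

/-- The set `C(S, G)` of child generators of `S`:
vertices `w ∉ S` such that `S ∪ {w}` is a connected bipartite vertex set. -/
def CSet (G : SimpleGraph V) (S : Set V) : Set V :=
  {w | w ∉ S ∧ CBVS G (S ∪ {w})}

/-- The vertex set of `G(S, ≥ u)`: `G` with all child generators of `S` smaller than `u`
deleted. -/
def Gge [LinearOrder V] (G : SimpleGraph V) (S : Set V) (u : V) : Set V :=
  {x | ¬ (x ∈ CSet G S ∧ x < u)}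

/-- `𝒮(G[A], T)`: connected bipartite vertex sets of the induced subgraph `G[A]`
containing `T`, viewed as subsets of `V`. -/
def Sol (G : SimpleGraph V) (A T : Set V) : Set (Set V) :=
  {S' | S' ⊆ A ∧ T ⊆ S' ∧ CBVS G S'}

/-- The family of all connected bipartite vertex sets of `G` containing a connected
bipartite vertex set `S` is `{S}` together with the disjoint union, over all child
generators `u` of `S`, of the families of connected bipartite vertex sets of `G(S, ≥u)`
containing `S ∪ {u}`. -/

lemma bip_mono {G : SimpleGraph V} {A B : Set V} (hAB : A ⊆ B)
    (hB : IsBip (G.induce B)) : IsBip (G.induce A) := by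
  obtain ⟨L, R, hLR, hdis, hadj⟩ := hB
  refine ⟨{v : A | (⟨↑v, hAB v.2⟩ : B) ∈ L}, {v : A | (⟨↑v, hAB v.2⟩ : B) ∈ R}, ?_, ?_, ?_⟩
  · intro v; exact hLR ⟨↑v, hAB v.2⟩
  · intro v; exact hdis ⟨↑v, hAB v.2⟩
  · intro u v h
    exact hadj ⟨↑u, hAB u.2⟩ ⟨↑v, hAB v.2⟩ h

lemma connected_insert {G : SimpleGraph V} {S : Set V} (hS : (G.induce S).Connected)
    {w s : V} (hs : s ∈ S) (hadj : G.Adj s w) :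
    (G.induce (S ∪ {w})).Connected := by
  have hsub : S ⊆ S ∪ {w} := Set.subset_union_left
  let ι : G.induce S →g G.induce (S ∪ {w}) :=
    ⟨fun v => ⟨↑v, hsub v.2⟩, fun {a b} h => h⟩
  have key : ∀ v : ↥(S ∪ {w}), (G.induce (S ∪ {w})).Reachable ⟨s, hsub hs⟩ v := by
    intro v
    rcases v.2 with hv | hv
    · exact (hS.preconnected ⟨s, hs⟩ ⟨↑v, hv⟩).map ι
    · have : v = ⟨w, Or.inr rfl⟩ := Subtype.ext hv
      rw [this]
      exact SimpleGraph.Adj.reachable (by exact hadj)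
  rw [SimpleGraph.connected_iff]
  exact ⟨fun a b => (key a).symm.trans (key b), ⟨⟨s, hsub hs⟩⟩⟩

lemma walk_cross {G : SimpleGraph V} {S' S : Set V} :
    ∀ {x y : ↥S'}, (G.induce S').Walk x y → ↑x ∈ S → ↑y ∉ S →
      ∃ a b : V, a ∈ S ∧ b ∈ S' ∧ b ∉ S ∧ G.Adj a b := by
  intro x y p
  induction p with
  | nil => intro hx hy; exact absurd hx hy
  | @cons u v z h p ih =>
    intro hu hz
    by_cases hv : ↑v ∈ S
    · exact ih hv hz
    · exact ⟨↑u, ↑v, hu, v.2, hv, h⟩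

lemma exists_childgen {G : SimpleGraph V} {S S' : Set V} (hS : CBVS G S)
    (hS' : CBVS G S') (hsub : S ⊆ S') (hne : S ≠ S') :
    ∃ u ∈ CSet G S, u ∈ S' := by
  obtain ⟨s₀, hs₀⟩ := Set.nonempty_coe_sort.mp hS.1.nonempty
  obtain ⟨w₀, hw₀S', hw₀S⟩ : ∃ w, w ∈ S' ∧ w ∉ S := by
    by_contra h
    push_neg at h
    exact hne (Set.Subset.antisymm hsub h)
  obtain ⟨p⟩ := hS'.1.preconnected ⟨s₀, hsub hs₀⟩ ⟨w₀, hw₀S'⟩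
  obtain ⟨a, b, haS, hbS', hbS, hab⟩ := walk_cross p hs₀ hw₀S
  have hconn : (G.induce (S ∪ {b})).Connected := connected_insert hS.1 haS hab
  have hbip : IsBip (G.induce (S ∪ {b})) := by
    refine bip_mono ?_ hS'.2
    intro x hx
    rcases hx with hx | hx
    · exact hsub hx
    · rw [hx]; exact hbS'
  exact ⟨b, ⟨hbS, hconn, hbip⟩, hbS'⟩

theorem stmt_6 [Fintype V] [LinearOrder V] (G : SimpleGraph V) (S : Set V)
    (hS : CBVS G S) :
    (Sol G Set.univ S = {S} ∪ ⋃ u ∈ CSet G S, Sol G (Gge G S u) (S ∪ {u})) ∧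
      (∀ u ∈ CSet G S, S ∉ Sol G (Gge G S u) (S ∪ {u})) ∧
      (∀ u ∈ CSet G S, ∀ v ∈ CSet G S, u ≠ v →
        Sol G (Gge G S u) (S ∪ {u}) ∩ Sol G (Gge G S v) (S ∪ {v}) = ∅) := by
  refine ⟨?_, ?_, ?_⟩
  · ext S'
    constructor
    · rintro ⟨-, hSsub, hS'⟩
      by_cases hEq : S' = S
      · exact Or.inl hEq
      · right
        have hT : {u | u ∈ CSet G S ∧ u ∈ S'}.Nonempty := by
          obtain ⟨u, hu, huS'⟩ := exists_childgen hS hS' hSsub (fun h => hEq h.symm)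
          exact ⟨u, hu, huS'⟩
        obtain ⟨u, hu, humin⟩ := Set.exists_min_image _ id (Set.toFinite _) hT
        refine Set.mem_biUnion hu.1 ⟨?_, ?_, hS'⟩
        · intro x hxS'
          rintro ⟨hxC, hxu⟩
          exact absurd (humin x ⟨hxC, hxS'⟩) (not_le.mpr hxu)
        · exact Set.union_subset hSsub (Set.singleton_subset_iff.mpr hu.2)
    · rintro (h | h)
      · rw [Set.mem_singleton_iff.mp h]
        exact ⟨Set.subset_univ _, subset_rfl, hS⟩
      · simp only [Set.mem_iUnion] at h
        obtain ⟨u, hu, hsub, hTsub, hS'⟩ := h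
        exact ⟨Set.subset_univ _, (Set.subset_union_left).trans hTsub, hS'⟩
  · rintro u hu ⟨-, hTsub, -⟩
    exact hu.1 (hTsub (Or.inr rfl))
  · intro u hu v hv huv
    ext S'
    simp only [Set.mem_inter_iff, Set.mem_empty_iff_false, iff_false]
    rintro ⟨⟨hsubu, hTu, -⟩, ⟨hsubv, hTv, -⟩⟩
    rcases huv.lt_or_gt with h | h
    · exact hsubv (hTu (Or.inr rfl)) ⟨hu, h⟩
    · exact hsubu (hTv (Or.inr rfl)) ⟨hv, h⟩
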